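/- Under the assumptions of the payoff upper bound (Aᵢ ≤ Iᵢ a.s., ∑ᵢ Aᵢ ≤ 1 a.s., Iᵢ independent of Xᵢ, cᵢ = E[(Xᵢ − τᵢ)₊]), if additionally the policy is non-exposed, i.e., Iᵢ (Xᵢ − τᵢ)₊ = Aᵢ (Xᵢ − τᵢ)₊ almost surely for every i, then E[∑ᵢ (Aᵢ Xᵢ − Iᵢ cᵢ)] = E[∑ᵢ Aᵢ κᵢ] where κᵢ = min(Xᵢ, τᵢ). -/

import Mathlib

open MeasureTheory ProbabilityTheory

theorem stmt_8 {Ω : Type*} [MeasurableSpace Ω] (μ : Measure Ω) [IsProbabilityMeasure μ]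
    (n : ℕ) (X A I : Fin n → Ω → ℝ) (τ c : Fin n → ℝ)
    (hXm : ∀ i, Measurable (X i)) (hAm : ∀ i, Measurable (A i))
    (hIm : ∀ i, Measurable (I i))
    (hXpos : ∀ i ω, 0 ≤ X i ω) (hτ : ∀ i, 0 ≤ τ i)
    (hA01 : ∀ i ω, A i ω = 0 ∨ A i ω = 1) (hI01 : ∀ i ω, I i ω = 0 ∨ I i ω = 1)
    (hAI : ∀ i, ∀ᵐ ω ∂μ, A i ω ≤ I i ω)
    (hsum : ∀ᵐ ω ∂μ, ∑ i, A i ω ≤ 1)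
    (hindep : ∀ i, IndepFun (I i) (X i) μ)
    (hc : ∀ i, c i = ∫ ω, max (X i ω - τ i) 0 ∂μ)
    (hXint : ∀ i, Integrable (X i) μ)
    (hnonexposed : ∀ i, ∀ᵐ ω ∂μ,
      I i ω * max (X i ω - τ i) 0 = A i ω * max (X i ω - τ i) 0) :
    ∫ ω, (∑ i, (A i ω * X i ω - I i ω * c i)) ∂μ
      = ∫ ω, (∑ i, A i ω * min (X i ω) (τ i)) ∂μ := by
  -- auxiliary integrability facts
  have hAb : ∀ i ω, ‖A i ω‖ ≤ 1 := by
    intro i ω; rcases hA01 i ω with h | h <;> simp [h]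
  have hIb : ∀ i ω, ‖I i ω‖ ≤ 1 := by
    intro i ω; rcases hI01 i ω with h | h <;> simp [h]
  have hposm : ∀ i, Measurable (fun ω => max (X i ω - τ i) 0) :=
    fun i => ((hXm i).sub measurable_const).max measurable_const
  have hposint : ∀ i, Integrable (fun ω => max (X i ω - τ i) 0) μ :=
    fun i => ((hXint i).sub (integrable_const (τ i))).pos_part
  have hAX : ∀ i, Integrable (fun ω => A i ω * X i ω) μ :=
    fun i => (hXint i).bdd_mul (hAm i).aestronglyMeasurable (Filter.Eventually.of_forall (hAb i))
  have hApos : ∀ i, Integrable (fun ω => A i ω * max (X i ω - τ i) 0) μ :=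
    fun i => (hposint i).bdd_mul (hAm i).aestronglyMeasurable (Filter.Eventually.of_forall (hAb i))
  have hIc : ∀ i, Integrable (fun ω => I i ω * c i) μ := by
    intro i
    apply Integrable.mono' (integrable_const (|c i|))
      ((hIm i).mul_const _).aestronglyMeasurable
    filter_upwards with ω
    calc ‖I i ω * c i‖ = ‖I i ω‖ * ‖c i‖ := norm_mul _ _
      _ ≤ 1 * |c i| := by
          exact mul_le_mul_of_nonneg_right (hIb i ω) (abs_nonneg _)
      _ = |c i| := one_mul _
  have hAmin : ∀ i, Integrable (fun ω => A i ω * min (X i ω) (τ i)) μ := by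
    intro i
    apply Integrable.mono' (integrable_const (τ i))
      ((hAm i).mul ((hXm i).min measurable_const)).aestronglyMeasurable
    filter_upwards with ω
    have h0 : 0 ≤ min (X i ω) (τ i) := le_min (hXpos i ω) (hτ i)
    calc ‖A i ω * min (X i ω) (τ i)‖ = ‖A i ω‖ * ‖min (X i ω) (τ i)‖ := norm_mul _ _
      _ ≤ 1 * (τ i) := by
          apply mul_le_mul (hAb i ω) _ (norm_nonneg _) zero_le_one
          rw [Real.norm_of_nonneg h0]; exact min_le_right _ _
      _ = τ i := one_mul _
  -- key per-coordinate identity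
  have key : ∀ i, ∫ ω, (A i ω * X i ω - I i ω * c i) ∂μ
      = ∫ ω, A i ω * min (X i ω) (τ i) ∂μ := by
    intro i
    have hsplit : ∀ ω, A i ω * X i ω
        = A i ω * min (X i ω) (τ i) + A i ω * max (X i ω - τ i) 0 := by
      intro ω
      have : min (X i ω) (τ i) + max (X i ω - τ i) 0 = X i ω := by
        rcases le_total (X i ω) (τ i) with h | h
        · rw [min_eq_left h, max_eq_right (by linarith)]; ring
        · rw [min_eq_right h, max_eq_left (by linarith)]; ring
      conv_lhs => rw [← this, mul_add]
    have hindpos : IndepFun (I i) (fun ω => max (X i ω - τ i) 0) μ :=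
      (hindep i).comp measurable_id ((measurable_id.sub measurable_const).max measurable_const)
    have hIcval : ∫ ω, I i ω * c i ∂μ
        = ∫ ω, A i ω * max (X i ω - τ i) 0 ∂μ := by
      have h1 : ∫ ω, I i ω * c i ∂μ = (∫ ω, I i ω ∂μ) * c i := integral_mul_const _ _
      have h2 : ∫ ω, I i ω * max (X i ω - τ i) 0 ∂μ
          = (∫ ω, I i ω ∂μ) * ∫ ω, max (X i ω - τ i) 0 ∂μ :=
        hindpos.integral_mul_eq_mul_integral (hIm i).aestronglyMeasurable (hposm i).aestronglyMeasurable
      have h3 : ∫ ω, I i ω * max (X i ω - τ i) 0 ∂μ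
          = ∫ ω, A i ω * max (X i ω - τ i) 0 ∂μ :=
        integral_congr_ae (hnonexposed i)
      rw [h1, hc i, ← h2, h3]
    rw [integral_sub (hAX i) (hIc i), hIcval]
    have h4 : ∫ ω, A i ω * X i ω ∂μ
        = ∫ ω, A i ω * min (X i ω) (τ i) ∂μ + ∫ ω, A i ω * max (X i ω - τ i) 0 ∂μ := by
      rw [← integral_add (hAmin i) (hApos i)]
      exact integral_congr_ae (Filter.Eventually.of_forall fun ω => hsplit ω)
    rw [h4]; ring
  have hint : ∀ i : Fin n, Integrable (fun ω => A i ω * X i ω - I i ω * c i) μ :=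
    fun i => (hAX i).sub (hIc i)
  rw [integral_finset_sum _ (fun i _ => hint i),
      integral_finset_sum _ (fun i _ => hAmin i)]
  exact Finset.sum_congr rfl fun i _ => key i
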